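/- Let Z be a real-valued random variable with mean 0 that is 1/2-subgaussian, i.e. E[exp(r·Z)] ≤ exp(r²/8) for all real r. Let (Z_i)_{i∈ℕ} be i.i.d. copies of Z on a probability space Ω, let μ̂_n = (1/n)∑_{i=1}^n Z_i, and let J be a stopping time with values in ℕ ∪ {∞} with respect to the filtration generated by the samples (Z_i). Fix a constant b > 0 and define ε_b(n) = sqrt(((3/5)·log(log_{11/10}(n) + 1) + b)/n) and δ_b = 24·exp(−9b/5). Then Pr[J < ∞ and |μ̂_J| ≥ ε_b(J)] ≤ δ_b. -/

import Mathlib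

open MeasureTheory ProbabilityTheory

/-- The adaptive confidence radius `ε_b(n) = sqrt(((3/5)·log(log_{11/10}(n) + 1) + b)/n)`. -/
noncomputable def epsb (b : ℝ) (n : ℕ) : ℝ :=
  Real.sqrt (((3 / 5) * Real.log (Real.log n / Real.log (11 / 10) + 1) + b) / n)

/-- The empirical mean `μ̂_n = (1/n) ∑_{i=1}^n Z_i`. -/
noncomputable def muhat {Ω : Type*} (Z : ℕ → Ω → ℝ) (n : ℕ) (ω : Ω) : ℝ :=
  (1 / n : ℝ) * ∑ i ∈ Finset.Icc 1 n, Z i ω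

open Real Finset

set_option linter.unusedSectionVars false
set_option maxHeartbeats 1000000

lemma acs_summable : Summable (fun k : ℕ => ((k : ℝ) + 1) ^ (-(12/11) : ℝ)) := by
  have h := (Real.summable_nat_rpow_inv (p := 12/11)).mpr (by norm_num)
  have h2 := h.comp_injective Nat.succ_injective
  refine h2.congr fun k => ?_
  simp only [Function.comp, Nat.succ_eq_add_one]
  rw [← Real.rpow_neg (by positivity)]
  push_cast
  ring_nf

lemma acs_anti {n : ℕ} : AntitoneOn (fun x : ℝ => x ^ (-(12/11) : ℝ)) (Set.Icc 1 (1 + (n:ℝ))) := by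
  intro x hx y hy hxy
  exact Real.rpow_le_rpow_of_nonpos (lt_of_lt_of_le one_pos hx.1) hxy (by norm_num)

lemma acs_sum_le : ∑' k : ℕ, ((k : ℝ) + 1) ^ (-(12/11) : ℝ) ≤ 12 := by
  refine Summable.tsum_le_of_sum_le acs_summable fun s => ?_
  obtain ⟨n, hn⟩ := s.exists_nat_subset_range
  have h1 : ∑ k ∈ s, ((k : ℝ) + 1) ^ (-(12/11) : ℝ)
      ≤ ∑ k ∈ range n, ((k : ℝ) + 1) ^ (-(12/11) : ℝ) :=
    Finset.sum_le_sum_of_subset_of_nonneg hn (fun i _ _ => by positivity)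
  refine h1.trans ?_
  cases n with
  | zero => simp
  | succ m =>
    rw [Finset.sum_range_succ']
    have h0 : ((0 : ℕ) : ℝ) + 1 = 1 := by norm_num
    have hf0 : (((0:ℕ) : ℝ) + 1) ^ (-(12/11) : ℝ) = 1 := by rw [h0, Real.one_rpow]
    rw [hf0]
    have h2 : ∑ i ∈ range m, (((i + 1 : ℕ) : ℝ) + 1) ^ (-(12/11) : ℝ)
        ≤ ∫ x in (1:ℝ)..(1 + (m:ℝ)), x ^ (-(12/11) : ℝ) := by
      have := AntitoneOn.sum_le_integral (x₀ := (1:ℝ)) (a := m)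
        (f := fun x : ℝ => x ^ (-(12/11) : ℝ)) acs_anti
      refine le_trans (le_of_eq ?_) this
      refine Finset.sum_congr rfl fun i _ => ?_
      push_cast
      ring_nf
    have h3 : ∫ x in (1:ℝ)..(1 + (m:ℝ)), x ^ (-(12/11) : ℝ) ≤ 11 := by
      rw [integral_rpow (Or.inr ⟨by norm_num, by
        rw [Set.uIcc_of_le (le_add_of_nonneg_right (Nat.cast_nonneg m))]
        intro h
        exact absurd h.1 (by norm_num)⟩)]
      have hpos : (0:ℝ) ≤ (1 + (m:ℝ)) ^ ((-(12/11) : ℝ) + 1) := by positivity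
      rw [Real.one_rpow]
      have : (-(12/11) : ℝ) + 1 = -(1/11) := by norm_num
      rw [this]
      have h4 : (0:ℝ) ≤ (1 + (m:ℝ)) ^ (-(1/11) : ℝ) := by positivity
      rw [div_le_iff_of_neg (by norm_num : (-(1/11):ℝ) < 0)]
      nlinarith
    linarith

section AcsAux

variable {Ω : Type*} [MeasurableSpace Ω] {μ : Measure Ω} [IsProbabilityMeasure μ]
  {Z : ℕ → Ω → ℝ}

lemma acs_mgf_le (hmeas : ∀ i, Measurable (Z i))
    (hindep : iIndepFun Z μ)
    (hsubg : ∀ i (r : ℝ), ∫ ω, Real.exp (r * Z i ω) ∂μ ≤ Real.exp (r ^ 2 / 8))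
    (s : Finset ℕ) (l : ℝ) :
    ∫ ω, Real.exp (l * ∑ i ∈ s, Z i ω) ∂μ ≤ Real.exp (l ^ 2 * s.card / 8) := by
  have h1 : ∫ ω, Real.exp (l * ∑ i ∈ s, Z i ω) ∂μ = mgf (∑ i ∈ s, Z i) μ l := by
    unfold mgf; congr 1; funext ω; simp [Finset.sum_apply]
  rw [h1, hindep.mgf_sum hmeas s]
  calc ∏ i ∈ s, mgf (Z i) μ l ≤ ∏ i ∈ s, Real.exp (l ^ 2 / 8) :=
        Finset.prod_le_prod (fun i _ => mgf_nonneg) (fun i _ => hsubg i l)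
    _ = Real.exp (l ^ 2 * s.card / 8) := by
        rw [Finset.prod_const, ← Real.exp_nat_mul]
        congr 1; ring

lemma acs_exp_int (hmeas : ∀ i, Measurable (Z i))
    (hindep : iIndepFun Z μ)
    (hmgf_int : ∀ i (r : ℝ), Integrable (fun ω => Real.exp (r * Z i ω)) μ)
    (s : Finset ℕ) (l : ℝ) :
    Integrable (fun ω => Real.exp (l * ∑ i ∈ s, Z i ω)) μ := by
  have := hindep.integrable_exp_mul_sum (t := l) hmeas (s := s) (fun i _ => hmgf_int i l)
  simpa [Finset.sum_apply] using this

lemma acs_one_le (hmeas : ∀ i, Measurable (Z i))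
    (hindep : iIndepFun Z μ)
    (hint : ∀ i, Integrable (Z i) μ)
    (hmean : ∀ i, ∫ ω, Z i ω ∂μ = 0)
    (hmgf_int : ∀ i (r : ℝ), Integrable (fun ω => Real.exp (r * Z i ω)) μ)
    (s : Finset ℕ) (l : ℝ) :
    (1 : ℝ) ≤ ∫ ω, Real.exp (l * ∑ i ∈ s, Z i ω) ∂μ := by
  have hW : Integrable (fun ω => ∑ i ∈ s, Z i ω) μ := integrable_finset_sum s (fun i _ => hint i)
  have hexp := acs_exp_int hmeas hindep hmgf_int s l
  have h2 : ∫ ω, (1 + l * ∑ i ∈ s, Z i ω) ∂μ = 1 := by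
    rw [integral_add (integrable_const 1) (hW.const_mul l), MeasureTheory.integral_const_mul,
      integral_finset_sum s (fun i _ => hint i)]
    simp [hmean]
  calc (1:ℝ) = ∫ ω, (1 + l * ∑ i ∈ s, Z i ω) ∂μ := h2.symm
    _ ≤ ∫ ω, Real.exp (l * ∑ i ∈ s, Z i ω) ∂μ := by
        refine integral_mono ((integrable_const 1).add (hW.const_mul l)) hexp fun ω => ?_
        have := Real.add_one_le_exp (l * ∑ i ∈ s, Z i ω)
        linarith

lemma acs_maximal (hmeas : ∀ i, Measurable (Z i))
    (hindep : iIndepFun Z μ)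
    (hint : ∀ i, Integrable (Z i) μ)
    (hmean : ∀ i, ∫ ω, Z i ω ∂μ = 0)
    (hmgf_int : ∀ i (r : ℝ), Integrable (fun ω => Real.exp (r * Z i ω)) μ)
    (hsubg : ∀ i (r : ℝ), ∫ ω, Real.exp (r * Z i ω) ∂μ ≤ Real.exp (r ^ 2 / 8))
    (N : ℕ) (t l : ℝ) (hl : 0 ≤ l) :
    μ {ω | ∃ n ∈ Finset.Icc 1 N, t ≤ ∑ i ∈ Finset.Icc 1 n, Z i ω}
      ≤ ENNReal.ofReal (Real.exp (-(l * t) + l ^ 2 * N / 8)) := by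
  classical
  set S : ℕ → Ω → ℝ := fun n ω => ∑ i ∈ Finset.Icc 1 n, Z i ω with hSdef
  have hSmeas : ∀ n, Measurable (S n) := fun n => Finset.measurable_sum _ (fun i _ => hmeas i)
  set B : ℕ → Set Ω :=
    fun n => {ω | t ≤ S n ω ∧ ∀ m ∈ Finset.Icc 1 N, m < n → S m ω < t} with hBdef
  have hBmeas : ∀ n, MeasurableSet (B n) := by
    intro n
    have hEq : B n = {ω | t ≤ S n ω} ∩
        ⋂ m ∈ Finset.Icc 1 N, ⋂ (_ : m < n), {ω | S m ω < t} := by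
      ext ω
      simp only [hBdef, Set.mem_setOf_eq, Set.mem_inter_iff, Set.mem_iInter]
    rw [hEq]
    exact (measurableSet_le measurable_const (hSmeas n)).inter
      (MeasurableSet.biInter (Finset.Icc 1 N : Finset ℕ).countable_toSet fun m _ =>
        MeasurableSet.iInter fun _ => measurableSet_lt (hSmeas m) measurable_const)
  have hBdisj : (↑(Finset.Icc 1 N) : Set ℕ).PairwiseDisjoint B := by
    intro n hn m hm hnm
    simp only [Finset.coe_Icc, Set.mem_Icc] at hn hm
    refine Set.disjoint_left.mpr fun ω hωn hωm => ?_
    rcases lt_or_gt_of_ne hnm with h | h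
    · exact absurd hωn.1 (not_le.mpr (hωm.2 n (Finset.mem_Icc.mpr hn) h))
    · exact absurd hωm.1 (not_le.mpr (hωn.2 m (Finset.mem_Icc.mpr hm) h))
  have hcover : {ω | ∃ n ∈ Finset.Icc 1 N, t ≤ S n ω} ⊆ ⋃ n ∈ Finset.Icc 1 N, B n := by
    intro ω hω
    have hex : ∃ k, k ∈ Finset.Icc 1 N ∧ t ≤ S k ω := by
      obtain ⟨n, hn, hnt⟩ := hω; exact ⟨n, hn, hnt⟩
    obtain ⟨hk1, hk2⟩ := Nat.find_spec hex
    refine Set.mem_biUnion hk1 ⟨hk2, fun m hm hmk => ?_⟩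
    by_contra h
    exact Nat.find_min hex hmk ⟨hm, not_lt.mp h⟩
  -- integrability of exp(l * S N)
  have hintSN : Integrable (fun ω => Real.exp (l * S N ω)) μ :=
    acs_exp_int hmeas hindep hmgf_int (Finset.Icc 1 N) l
  -- the key per-index estimate
  have hstep : ∀ n ∈ Finset.Icc 1 N,
      Real.exp (l * t) * (μ (B n)).toReal
        ≤ ∫ ω, Set.indicator (B n) (fun ω' => Real.exp (l * S N ω')) ω ∂μ := by
    intro n hn
    obtain ⟨hn1, hnN⟩ := Finset.mem_Icc.mp hn
    set s1 : Finset ℕ := Finset.Icc 1 n with hs1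
    set s2 : Finset ℕ := Finset.Icc (n + 1) N with hs2
    have hdisjs : Disjoint s1 s2 := by
      rw [Finset.disjoint_left]
      intro i hi1 hi2
      rw [hs1, Finset.mem_Icc] at hi1
      rw [hs2, Finset.mem_Icc] at hi2
      omega
    have hsplit : ∀ ω, S N ω = S n ω + ∑ i ∈ s2, Z i ω := by
      intro ω
      rw [hSdef]
      dsimp only
      rw [← Finset.sum_union hdisjs]
      congr 1
      rw [hs1, hs2]
      ext i
      simp only [Finset.mem_union, Finset.mem_Icc]
      omega
    -- the functions
    set f : Ω → ℝ := Set.indicator (B n) (fun ω => Real.exp (l * S n ω)) with hfdef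
    set g : Ω → ℝ := fun ω => Real.exp (l * ∑ i ∈ s2, Z i ω) with hgdef
    -- independence via composition with tuple maps
    have hIndepFG : IndepFun f g μ := by
      set pad : ((↥s1 → ℝ)) → ℕ → ℝ :=
        fun v i => if h : i ∈ s1 then v ⟨i, h⟩ else 0 with hpad
      set T : ℕ → (↥s1 → ℝ) → ℝ := fun m v => ∑ i ∈ Finset.Icc 1 m, pad v i with hT
      have hTmeas : ∀ m, Measurable (T m) := by
        intro m
        refine Finset.measurable_sum _ fun i _ => ?_
        rw [hpad]
        dsimp only
        by_cases h : i ∈ s1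
        · simp only [h, dif_pos]
          exact measurable_pi_apply _
        · simp only [h, dif_neg, not_false_iff]
          exact measurable_const
      set A : Set (↥s1 → ℝ) :=
        {v | t ≤ T n v ∧ ∀ m ∈ Finset.Icc 1 N, m < n → T m v < t} with hA
      have hAmeas : MeasurableSet A := by
        have hEq : A = {v | t ≤ T n v} ∩
            ⋂ m ∈ Finset.Icc 1 N, ⋂ (_ : m < n), {v | T m v < t} := by
          ext v
          simp only [hA, Set.mem_setOf_eq, Set.mem_inter_iff, Set.mem_iInter]
        rw [hEq]
        exact (measurableSet_le measurable_const (hTmeas n)).inter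
          (MeasurableSet.biInter (Finset.Icc 1 N : Finset ℕ).countable_toSet fun m _ =>
            MeasurableSet.iInter fun _ => measurableSet_lt (hTmeas m) measurable_const)
      set F : (↥s1 → ℝ) → ℝ := Set.indicator A (fun v => Real.exp (l * T n v)) with hF
      set G : (↥s2 → ℝ) → ℝ := fun v => Real.exp (l * ∑ i : ↥s2, v i) with hG
      have hFmeas : Measurable F :=
        Measurable.indicator ((measurable_const.mul (hTmeas n)).exp) hAmeas
      have hGmeas : Measurable G := by
        refine Measurable.exp (measurable_const.mul ?_)
        exact Finset.measurable_sum _ fun i _ => measurable_pi_apply _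
      have base := hindep.indepFun_finset s1 s2 hdisjs hmeas
      have hcomp := base.comp hFmeas hGmeas
      -- identify the compositions
      have hTval : ∀ m, m ≤ n → ∀ ω, T m (fun i : ↥s1 => Z (↑i) ω) = S m ω := by
        intro m hm ω
        rw [hT, hSdef]
        dsimp only
        refine Finset.sum_congr rfl fun i hi => ?_
        rw [hpad]
        dsimp only
        have hi' : i ∈ s1 := by
          rw [hs1, Finset.mem_Icc]
          rw [Finset.mem_Icc] at hi
          omega
        simp only [hi', dif_pos]
      have hFeq : (F ∘ fun ω (i : ↥s1) => Z (↑i) ω) = f := by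
        funext ω
        simp only [Function.comp_apply, hF, hfdef]
        have hmem : ((fun i : ↥s1 => Z (↑i) ω) ∈ A) ↔ (ω ∈ B n) := by
          rw [hA, hBdef]
          simp only [Set.mem_setOf_eq]
          constructor
          · rintro ⟨h1, h2⟩
            exact ⟨by rwa [hTval n le_rfl ω] at h1,
              fun m hm hmn => by
                have := h2 m hm hmn; rwa [hTval m hmn.le ω] at this⟩
          · rintro ⟨h1, h2⟩
            exact ⟨by rwa [hTval n le_rfl ω], fun m hm hmn => by
              rw [hTval m hmn.le ω]; exact h2 m hm hmn⟩
        by_cases hc : ω ∈ B n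
        · rw [Set.indicator_of_mem (hmem.mpr hc), Set.indicator_of_mem hc, hTval n le_rfl ω]
        · rw [Set.indicator_of_notMem (fun hc' => hc (hmem.mp hc')),
            Set.indicator_of_notMem hc]
      have hGeq : (G ∘ fun ω (i : ↥s2) => Z (↑i) ω) = g := by
        funext ω
        simp only [Function.comp_apply, hG, hgdef]
        congr 1
        congr 1
        exact Finset.sum_coe_sort s2 (fun i => Z i ω)
      rwa [hFeq, hGeq] at hcomp
    -- integrability
    have hintf : Integrable f μ := by
      have : Integrable (fun ω => Real.exp (l * S n ω)) μ :=
        acs_exp_int hmeas hindep hmgf_int s1 l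
      exact this.indicator (hBmeas n)
    have hintg : Integrable g μ := acs_exp_int hmeas hindep hmgf_int s2 l
    have hprod : ∫ ω, f ω * g ω ∂μ = (∫ ω, f ω ∂μ) * ∫ ω, g ω ∂μ :=
      hIndepFG.integral_mul_eq_mul_integral hintf.1 hintg.1
    have hmul : ∀ ω, f ω * g ω = Set.indicator (B n) (fun ω' => Real.exp (l * S N ω')) ω := by
      intro ω
      by_cases hc : ω ∈ B n
      · rw [hfdef]
        simp only [Set.indicator_of_mem hc, hgdef]
        rw [← Real.exp_add, hsplit ω]
        ring_nf
      · rw [hfdef]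
        simp only [Set.indicator_of_notMem hc, zero_mul]
    have hf_lb : Real.exp (l * t) * (μ (B n)).toReal ≤ ∫ ω, f ω ∂μ := by
      have hle : ∫ ω, Set.indicator (B n) (fun _ => Real.exp (l * t)) ω ∂μ
          ≤ ∫ ω, f ω ∂μ := by
        refine integral_mono ((integrable_const _).indicator (hBmeas n)) hintf fun ω => ?_
        by_cases hc : ω ∈ B n
        · rw [hfdef]
          simp only [Set.indicator_of_mem hc]
          exact Real.exp_le_exp.mpr (mul_le_mul_of_nonneg_left hc.1 hl)
        · rw [hfdef]; simp [Set.indicator_of_notMem hc]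
      rwa [integral_indicator_const _ (hBmeas n), smul_eq_mul, mul_comm] at hle
    have hg_lb : (1 : ℝ) ≤ ∫ ω, g ω ∂μ :=
      acs_one_le hmeas hindep hint hmean hmgf_int s2 l
    have hf_nonneg : 0 ≤ ∫ ω, f ω ∂μ :=
      integral_nonneg fun ω => Set.indicator_nonneg (fun _ _ => (Real.exp_pos _).le) ω
    calc Real.exp (l * t) * (μ (B n)).toReal ≤ ∫ ω, f ω ∂μ := hf_lb
      _ ≤ (∫ ω, f ω ∂μ) * ∫ ω, g ω ∂μ := le_mul_of_one_le_right hf_nonneg hg_lb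
      _ = ∫ ω, f ω * g ω ∂μ := hprod.symm
      _ = ∫ ω, Set.indicator (B n) (fun ω' => Real.exp (l * S N ω')) ω ∂μ :=
          integral_congr_ae (Filter.Eventually.of_forall hmul)
  -- sum it up
  have hSum : Real.exp (l * t) * (μ (⋃ n ∈ Finset.Icc 1 N, B n)).toReal
      ≤ Real.exp (l ^ 2 * N / 8) := by
    rw [measure_biUnion_finset hBdisj (fun n _ => hBmeas n)]
    rw [ENNReal.toReal_sum (fun n _ => measure_ne_top μ _), Finset.mul_sum]
    have h1 : ∑ n ∈ Finset.Icc 1 N, Real.exp (l * t) * (μ (B n)).toReal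
        ≤ ∑ n ∈ Finset.Icc 1 N,
          ∫ ω, Set.indicator (B n) (fun ω' => Real.exp (l * S N ω')) ω ∂μ :=
      Finset.sum_le_sum hstep
    have h2 : ∑ n ∈ Finset.Icc 1 N,
          ∫ ω, Set.indicator (B n) (fun ω' => Real.exp (l * S N ω')) ω ∂μ
        = ∫ ω, ∑ n ∈ Finset.Icc 1 N,
            Set.indicator (B n) (fun ω' => Real.exp (l * S N ω')) ω ∂μ :=
      (integral_finset_sum _ fun n _ => hintSN.indicator (hBmeas n)).symm
    have h3 : ∫ ω, ∑ n ∈ Finset.Icc 1 N,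
            Set.indicator (B n) (fun ω' => Real.exp (l * S N ω')) ω ∂μ
        ≤ ∫ ω, Real.exp (l * S N ω) ∂μ := by
      refine integral_mono (integrable_finset_sum _ fun n _ => hintSN.indicator (hBmeas n))
        hintSN fun ω => ?_
      by_cases hex : ∃ n₀ ∈ Finset.Icc 1 N, ω ∈ B n₀
      · obtain ⟨n₀, hn₀, hωn₀⟩ := hex
        rw [Finset.sum_eq_single_of_mem n₀ hn₀ (fun m hm hne => ?_)]
        · rw [Set.indicator_of_mem hωn₀]
        · refine Set.indicator_of_notMem ?_ _
          intro hωm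
          exact (Set.disjoint_left.mp (hBdisj hm hn₀ hne) hωm) hωn₀
      · push_neg at hex
        have : ∀ n ∈ Finset.Icc 1 N,
            Set.indicator (B n) (fun ω' => Real.exp (l * S N ω')) ω = 0 :=
          fun n hn => Set.indicator_of_notMem (hex n hn) _
        rw [Finset.sum_congr rfl this, Finset.sum_const, smul_zero]
        exact (Real.exp_pos _).le
    have h4 : ∫ ω, Real.exp (l * S N ω) ∂μ ≤ Real.exp (l ^ 2 * N / 8) := by
      have := acs_mgf_le hmeas hindep hsubg (Finset.Icc 1 N) l
      rwa [Nat.card_Icc, Nat.add_sub_cancel] at this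
    linarith
  -- conclude
  have hμfin : μ {ω | ∃ n ∈ Finset.Icc 1 N, t ≤ S n ω} ≠ ⊤ := measure_ne_top μ _
  calc μ {ω | ∃ n ∈ Finset.Icc 1 N, t ≤ S n ω}
      ≤ μ (⋃ n ∈ Finset.Icc 1 N, B n) := measure_mono hcover
    _ = ENNReal.ofReal ((μ (⋃ n ∈ Finset.Icc 1 N, B n)).toReal) :=
        (ENNReal.ofReal_toReal (measure_ne_top μ _)).symm
    _ ≤ ENNReal.ofReal (Real.exp (-(l * t) + l ^ 2 * N / 8)) := by
        refine ENNReal.ofReal_le_ofReal ?_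
        have hpos := Real.exp_pos (l * t)
        rw [Real.exp_add, Real.exp_neg, inv_mul_eq_div, le_div_iff₀ hpos]
        linarith [hSum]

end AcsAux

/-- Adaptive concentration inequality for i.i.d. 1/2-subgaussian samples
(Theorem A.1 / Theorem `thm:concentration`). -/
theorem adaptive_concentration_subgaussian
    {Ω : Type*} [MeasurableSpace Ω] (μ : Measure Ω) [IsProbabilityMeasure μ]
    (Z : ℕ → Ω → ℝ)
    (hmeas : ∀ i, Measurable (Z i))
    (hindep : iIndepFun Z μ)
    (hident : ∀ i, IdentDistrib (Z i) (Z 0) μ μ)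
    (hint : ∀ i, Integrable (Z i) μ)
    (hmean : ∀ i, ∫ ω, Z i ω ∂μ = 0)
    (hmgf_int : ∀ i (r : ℝ), Integrable (fun ω => Real.exp (r * Z i ω)) μ)
    (hsubg : ∀ i (r : ℝ), ∫ ω, Real.exp (r * Z i ω) ∂μ ≤ Real.exp (r ^ 2 / 8))
    (J : Ω → ℕ∞)
    (hJ1 : ∀ ω, 1 ≤ J ω)
    (hJstop : ∀ n : ℕ, MeasurableSet[MeasurableSpace.comap
        (fun ω (i : Fin n) => Z ((i : ℕ) + 1) ω) inferInstance] {ω | J ω = (n : ℕ∞)})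
    (b : ℝ) (hb : 0 < b) :
    μ {ω | ∃ n : ℕ, J ω = (n : ℕ∞) ∧ epsb b n ≤ |muhat Z n ω|}
      ≤ ENNReal.ofReal (24 * Real.exp (-9 * b / 5)) := by
  classical
  -- the negated family
  set W : ℕ → Ω → ℝ := fun i ω => -Z i ω with hWdef
  have hmeasW : ∀ i, Measurable (W i) := fun i => (hmeas i).neg
  have hindepW : iIndepFun W μ := by
    have h := hindep.comp (fun _ => fun x : ℝ => -x) (fun _ => measurable_neg)
    exact h
  have hintW : ∀ i, Integrable (W i) μ := fun i => (hint i).neg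
  have hmeanW : ∀ i, ∫ ω, W i ω ∂μ = 0 := fun i => by
    simp only [hWdef]; rw [integral_neg, hmean i, neg_zero]
  have hmgf_intW : ∀ i (r : ℝ), Integrable (fun ω => Real.exp (r * W i ω)) μ := fun i r => by
    have h := hmgf_int i (-r)
    simpa only [hWdef, neg_mul, mul_neg, neg_neg] using h
  have hsubgW : ∀ i (r : ℝ), ∫ ω, Real.exp (r * W i ω) ∂μ ≤ Real.exp (r ^ 2 / 8) :=
    fun i r => by
      have h := hsubg i (-r)
      rw [neg_sq] at h
      simpa only [hWdef, neg_mul, mul_neg] using h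
  -- epoch data
  set c : ℕ → ℝ := fun k => (3/5) * Real.log ((k : ℝ) + 1) + b with hc
  have hcpos : ∀ k, 0 < c k := fun k =>
    add_pos_of_nonneg_of_pos
      (mul_nonneg (by norm_num) (Real.log_nonneg (by linarith [Nat.cast_nonneg (α := ℝ) k]))) hb
  set u : ℕ → ℝ := fun k => (11/10 : ℝ) ^ k with hu
  have hupos : ∀ k, 0 < u k := fun k => pow_pos (by norm_num) k
  set tk : ℕ → ℝ := fun k => Real.sqrt (u k * c k) with htk
  have htkpos : ∀ k, 0 < tk k := fun k => Real.sqrt_pos.mpr (mul_pos (hupos k) (hcpos k))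
  set Nk : ℕ → ℕ := fun k => ⌊u (k+1)⌋₊ with hNk
  set lk : ℕ → ℝ := fun k => 4 * tk k / u (k+1) with hlk
  have hlknn : ∀ k, 0 ≤ lk k := fun k =>
    div_nonneg (by linarith [htkpos k]) (hupos (k+1)).le
  set E : ℕ → Set Ω := fun k =>
    {ω | ∃ n ∈ Finset.Icc 1 (Nk k), tk k ≤ ∑ i ∈ Finset.Icc 1 n, Z i ω} ∪
    {ω | ∃ n ∈ Finset.Icc 1 (Nk k), tk k ≤ ∑ i ∈ Finset.Icc 1 n, W i ω} with hE
  -- inclusion into the union of epoch events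
  have hincl : {ω | ∃ n : ℕ, J ω = (n : ℕ∞) ∧ epsb b n ≤ |muhat Z n ω|} ⊆ ⋃ k : ℕ, E k := by
    intro ω hω
    obtain ⟨n, hJn, heps⟩ := hω
    have hn1 : 1 ≤ n := by
      have h := hJ1 ω; rw [hJn] at h; exact_mod_cast h
    have hnpos : (0:ℝ) < n := by exact_mod_cast hn1
    have hn1R : (1:ℝ) ≤ n := by exact_mod_cast hn1
    set k : ℕ := ⌊Real.log n / Real.log (11/10)⌋₊ with hk
    have hlogn : (0:ℝ) ≤ Real.log n := Real.log_nonneg hn1R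
    have hl110 : (0:ℝ) < Real.log (11/10) := Real.log_pos (by norm_num)
    have hdivnn : 0 ≤ Real.log n / Real.log (11/10) := div_nonneg hlogn hl110.le
    have hnNk : n ≤ Nk k := by
      have h1 : Real.log n / Real.log (11/10) < (k : ℝ) + 1 := Nat.lt_floor_add_one _
      have h2 : Real.log n < ((k : ℝ) + 1) * Real.log (11/10) := by
        rw [div_lt_iff₀ hl110] at h1; linarith
      have h3 : Real.log (n : ℝ) < Real.log (u (k+1)) := by
        rw [hu]; dsimp only; rw [Real.log_pow]; push_cast; linarith
      have h4 : (n : ℝ) < u (k+1) := (Real.log_lt_log_iff hnpos (hupos (k+1))).mp h3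
      exact Nat.le_floor h4.le
    have hukn : u k ≤ (n : ℝ) := by
      have h1 : (k : ℝ) ≤ Real.log n / Real.log (11/10) := Nat.floor_le hdivnn
      have h2 : (k : ℝ) * Real.log (11/10) ≤ Real.log n := by
        rw [← le_div_iff₀ hl110]; exact h1
      have h3 : Real.log (u k) ≤ Real.log (n : ℝ) := by
        rw [hu]; dsimp only; rw [Real.log_pow]; linarith
      exact (Real.log_le_log_iff (hupos k) hnpos).mp h3
    have hck : c k ≤ (3/5) * Real.log (Real.log n / Real.log (11/10) + 1) + b := by
      rw [hc]; dsimp only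
      have h1 : (k : ℝ) + 1 ≤ Real.log n / Real.log (11/10) + 1 := by
        linarith [Nat.floor_le hdivnn]
      have h2 : Real.log ((k:ℝ)+1) ≤ Real.log (Real.log n / Real.log (11/10) + 1) :=
        Real.log_le_log (by positivity) h1
      linarith
    have htkle : tk k ≤ (n : ℝ) * epsb b n := by
      have hCnn : 0 ≤ (3/5) * Real.log (Real.log n / Real.log (11/10) + 1) + b := by
        have := Real.log_nonneg (by linarith : (1:ℝ) ≤ Real.log n / Real.log (11/10) + 1)
        linarith
      have h1 : (n : ℝ) * epsb b n =
          Real.sqrt ((n:ℝ) * ((3/5) * Real.log (Real.log n / Real.log (11/10) + 1) + b)) := by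
        rw [epsb]
        rw [show (n:ℝ) * ((3/5) * Real.log (Real.log n / Real.log (11/10) + 1) + b)
            = (n:ℝ)^2 * (((3/5) * Real.log (Real.log n / Real.log (11/10) + 1) + b) / n) by
          field_simp]
        rw [Real.sqrt_mul (sq_nonneg _), Real.sqrt_sq hnpos.le]
      rw [h1, htk]
      dsimp only
      exact Real.sqrt_le_sqrt (mul_le_mul hukn hck (hcpos k).le hnpos.le)
    have hSn : tk k ≤ |∑ i ∈ Finset.Icc 1 n, Z i ω| := by
      have h1 : (n:ℝ) * epsb b n ≤ (n:ℝ) * |muhat Z n ω| :=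
        mul_le_mul_of_nonneg_left heps hnpos.le
      have h2 : (n:ℝ) * |muhat Z n ω| = |∑ i ∈ Finset.Icc 1 n, Z i ω| := by
        rw [muhat, abs_mul, abs_of_pos (by positivity : (0:ℝ) < 1/(n:ℝ))]
        field_simp
      linarith
    rcases le_abs.mp hSn with h | h
    · exact Set.mem_iUnion.mpr ⟨k, Or.inl ⟨n, Finset.mem_Icc.mpr ⟨hn1, hnNk⟩, h⟩⟩
    · refine Set.mem_iUnion.mpr ⟨k, Or.inr ⟨n, Finset.mem_Icc.mpr ⟨hn1, hnNk⟩, ?_⟩⟩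
      simp only [hWdef]
      rw [Finset.sum_neg_distrib]
      exact h
  -- per-epoch bound
  have hepoch : ∀ k : ℕ, μ (E k)
      ≤ ENNReal.ofReal (2 * Real.exp (-9*b/5) * ((k:ℝ)+1) ^ (-(12/11) : ℝ)) := by
    intro k
    have hexp_le : Real.exp (-(lk k * tk k) + (lk k) ^ 2 * (Nk k) / 8)
        ≤ Real.exp (-9*b/5) * ((k:ℝ)+1) ^ (-(12/11) : ℝ) := by
      have hNle : ((Nk k : ℕ) : ℝ) ≤ u (k+1) := Nat.floor_le (hupos _).le
      have hA : (lk k) ^ 2 * (Nk k) / 8 ≤ (lk k) ^ 2 * u (k+1) / 8 := by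
        have := sq_nonneg (lk k); nlinarith
      have hexpand : -(lk k * tk k) + (lk k) ^ 2 * u (k+1) / 8 = -(2 * (tk k)^2 / u (k+1)) := by
        rw [hlk]; dsimp only; field_simp; ring
      have htsq : (tk k) ^ 2 = u k * c k := Real.sq_sqrt (mul_pos (hupos k) (hcpos k)).le
      have husucc : u (k+1) = u k * (11/10) := pow_succ _ _
      have h2 : 2 * (tk k) ^ 2 / u (k+1) = (20/11) * c k := by
        rw [htsq, husucc]
        field_simp
        rw [div_eq_iff (hupos k).ne']
        ring
      have h3 : Real.exp (-(lk k * tk k) + (lk k) ^ 2 * (Nk k) / 8)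
          ≤ Real.exp (-((20/11) * c k)) := by
        apply Real.exp_le_exp.mpr
        rw [← h2, ← hexpand]
        linarith
      refine h3.trans ?_
      rw [hc]
      dsimp only
      rw [show -((20/11:ℝ) * ((3/5) * Real.log ((k:ℝ)+1) + b))
          = Real.log ((k:ℝ)+1) * (-(12/11)) + (-(20/11) * b) by ring, Real.exp_add]
      have h4 : Real.exp (Real.log ((k:ℝ)+1) * (-(12/11))) = ((k:ℝ)+1) ^ (-(12/11) : ℝ) :=
        (Real.rpow_def_of_pos (by positivity) _).symm
      rw [h4]
      have h5 : Real.exp (-(20/11) * b) ≤ Real.exp (-9*b/5) :=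
        Real.exp_le_exp.mpr (by linarith)
      have h6 : (0:ℝ) ≤ ((k:ℝ)+1) ^ (-(12/11) : ℝ) := by positivity
      exact (mul_le_mul_of_nonneg_left h5 h6).trans_eq (mul_comm _ _)
    have hb1 := acs_maximal hmeas hindep hint hmean hmgf_int hsubg (Nk k) (tk k) (lk k) (hlknn k)
    have hb2 := acs_maximal hmeasW hindepW hintW hmeanW hmgf_intW hsubgW
      (Nk k) (tk k) (lk k) (hlknn k)
    calc μ (E k) ≤ μ _ + μ _ := measure_union_le _ _
      _ ≤ ENNReal.ofReal (Real.exp (-(lk k * tk k) + (lk k) ^ 2 * (Nk k) / 8))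
          + ENNReal.ofReal (Real.exp (-(lk k * tk k) + (lk k) ^ 2 * (Nk k) / 8)) :=
            add_le_add hb1 hb2
      _ = ENNReal.ofReal (Real.exp (-(lk k * tk k) + (lk k) ^ 2 * (Nk k) / 8)
          + Real.exp (-(lk k * tk k) + (lk k) ^ 2 * (Nk k) / 8)) :=
            (ENNReal.ofReal_add (Real.exp_nonneg _) (Real.exp_nonneg _)).symm
      _ ≤ ENNReal.ofReal (2 * Real.exp (-9*b/5) * ((k:ℝ)+1) ^ (-(12/11) : ℝ)) := by
            apply ENNReal.ofReal_le_ofReal; linarith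
  -- put it together
  calc μ {ω | ∃ n : ℕ, J ω = (n : ℕ∞) ∧ epsb b n ≤ |muhat Z n ω|}
      ≤ μ (⋃ k : ℕ, E k) := measure_mono hincl
    _ ≤ ∑' k : ℕ, μ (E k) := measure_iUnion_le _
    _ ≤ ∑' k : ℕ, ENNReal.ofReal (2 * Real.exp (-9*b/5) * ((k:ℝ)+1) ^ (-(12/11) : ℝ)) :=
        ENNReal.tsum_le_tsum hepoch
    _ = ENNReal.ofReal (∑' k : ℕ, 2 * Real.exp (-9*b/5) * ((k:ℝ)+1) ^ (-(12/11) : ℝ)) :=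
        (ENNReal.ofReal_tsum_of_nonneg (fun k => by positivity)
          (acs_summable.mul_left _)).symm
    _ ≤ ENNReal.ofReal (24 * Real.exp (-9 * b / 5)) := by
        apply ENNReal.ofReal_le_ofReal
        rw [tsum_mul_left]
        have h12 := acs_sum_le
        have hpos : (0:ℝ) ≤ 2 * Real.exp (-9*b/5) := by positivity
        nlinarith [Real.exp_pos (-9*b/5)]
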